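/- Let C ⊆ 2^[n] be a code, {T_j} a collection of trunks in C, and T a trunk generated by {T_j} (i.e., an intersection of some of the T_j). Let f be the morphism determined by {T_j} and g the morphism determined by {T_j} ∪ {T}. Then the images f(C) and g(C) are isomorphic codes. -/
import Mathlib


/-- The trunk of `σ` in the code `C`. -/
def Tk {n : ℕ} (C : Set (Finset (Fin n))) (σ : Finset (Fin n)) : Set (Finset (Fin n)) :=
  {c ∈ C | σ ⊆ c}

/-- `T` is a trunk in the code `C`. -/
def IsTrunk {n : ℕ} (C T : Set (Finset (Fin n))) : Prop :=
  T = ∅ ∨ ∃ σ, T = Tk C σ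

/-- `f` is a morphism from the code `C` to the code `D`. -/
def IsMorphismOn {n m : ℕ} (C : Set (Finset (Fin n))) (D : Set (Finset (Fin m)))
    (f : Finset (Fin n) → Finset (Fin m)) : Prop :=
  (∀ c ∈ C, f c ∈ D) ∧ ∀ T, IsTrunk D T → IsTrunk C (C ∩ f ⁻¹' T)

open Classical in
/-- The morphism determined by a collection of trunks `T j`. -/
noncomputable def detMor {n m : ℕ} (T : Fin m → Set (Finset (Fin n)))
    (c : Finset (Fin n)) : Finset (Fin m) :=
  Finset.univ.filter fun j => c ∈ T j

open Classical

lemma mem_detMor {n m : ℕ} (T : Fin m → Set (Finset (Fin n))) (c : Finset (Fin n))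
    (j : Fin m) : j ∈ detMor T c ↔ c ∈ T j := by simp [detMor]

noncomputable def addLast {m : ℕ} (σ : Set (Fin m)) (d : Finset (Fin m)) :
    Finset (Fin (m + 1)) :=
  Finset.univ.filter fun j => Fin.lastCases (σ.toFinset ⊆ d) (fun i => i ∈ d) j

noncomputable def dropLast {m : ℕ} (d : Finset (Fin (m + 1))) : Finset (Fin m) :=
  Finset.univ.filter fun i => i.castSucc ∈ d

lemma mem_addLast_castSucc {m : ℕ} (σ : Set (Fin m)) (d : Finset (Fin m)) (i : Fin m) :
    i.castSucc ∈ addLast σ d ↔ i ∈ d := by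
  simp [addLast]

lemma mem_addLast_last {m : ℕ} (σ : Set (Fin m)) (d : Finset (Fin m)) :
    Fin.last m ∈ addLast σ d ↔ σ.toFinset ⊆ d := by
  simp [addLast]

lemma dropLast_addLast {m : ℕ} (σ : Set (Fin m)) (d : Finset (Fin m)) :
    dropLast (addLast σ d) = d := by
  ext i; simp [dropLast, mem_addLast_castSucc]

lemma addLast_detMor {n m : ℕ} (T : Fin m → Set (Finset (Fin n)))
    (T₀ : Set (Finset (Fin n))) (σ : Set (Fin m)) (hσ : T₀ = ⋂ j ∈ σ, T j)
    (c : Finset (Fin n)) :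
    addLast σ (detMor T c) = detMor (Fin.snoc T T₀) c := by
  ext j
  induction j using Fin.lastCases with
  | last =>
    rw [mem_addLast_last, mem_detMor, Fin.snoc_last, hσ]
    simp [Finset.subset_iff, mem_detMor]
  | cast i =>
    rw [mem_addLast_castSucc, mem_detMor, mem_detMor, Fin.snoc_castSucc]

lemma dropLast_detMor {n m : ℕ} (T : Fin m → Set (Finset (Fin n)))
    (T₀ : Set (Finset (Fin n))) (c : Finset (Fin n)) :
    dropLast (detMor (Fin.snoc T T₀) c) = detMor T c := by
  ext i; simp [dropLast, mem_detMor, Fin.snoc_castSucc]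

lemma subset_addLast_iff {m : ℕ} (σ : Set (Fin m)) (τ : Finset (Fin (m + 1)))
    (d : Finset (Fin m)) :
    τ ⊆ addLast σ d ↔
      ((Finset.univ.filter fun i : Fin m => i.castSucc ∈ τ) ∪
        (if Fin.last m ∈ τ then σ.toFinset else ∅)) ⊆ d := by
  constructor
  · intro hsub i hi
    rcases Finset.mem_union.1 hi with hi | hi
    · exact (mem_addLast_castSucc σ d i).1 (hsub (Finset.mem_filter.1 hi).2)
    · split_ifs at hi with hl
      · exact (mem_addLast_last σ d).1 (hsub hl) hi
      · simp at hi
  · intro hsub j hj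
    induction j using Fin.lastCases with
    | last =>
      rw [mem_addLast_last]
      intro i hi
      exact hsub (Finset.mem_union.2 (Or.inr (by simp [hj, hi])))
    | cast i =>
      rw [mem_addLast_castSucc]
      exact hsub (Finset.mem_union.2 (Or.inl (by simp [hj])))

lemma subset_dropLast_iff {m : ℕ} (τ : Finset (Fin m)) (d : Finset (Fin (m + 1))) :
    τ ⊆ dropLast d ↔ τ.map Fin.castSuccEmb ⊆ d := by
  simp [Finset.subset_iff, dropLast, Fin.castSuccEmb, Fin.castSucc, Fin.castAdd, Fin.castLE]

/-- Corollary 3.9: let `{T j}` be a collection of trunks in `C` and `T₀` a trunk generated by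
`{T j}` (an intersection of some of the `T j`).  If `f` is the morphism determined by `{T j}`
and `g` is the morphism determined by `{T j} ∪ {T₀}`, then the image codes `f(C)` and `g(C)`
are isomorphic. -/
theorem adding_generated_trunk_isomorphic {n m : ℕ} (C : Set (Finset (Fin n)))
    (T : Fin m → Set (Finset (Fin n))) (hT : ∀ j, IsTrunk C (T j))
    (T₀ : Set (Finset (Fin n))) (hT₀ : IsTrunk C T₀)
    (hgen : ∃ σ : Set (Fin m), σ.Nonempty ∧ T₀ = ⋂ j ∈ σ, T j) :
    ∃ (h : Finset (Fin m) → Finset (Fin (m + 1)))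
      (h' : Finset (Fin (m + 1)) → Finset (Fin m)),
      IsMorphismOn (detMor T '' C) (detMor (Fin.snoc T T₀) '' C) h ∧
      IsMorphismOn (detMor (Fin.snoc T T₀) '' C) (detMor T '' C) h' ∧
      (∀ d ∈ detMor T '' C, h' (h d) = d) ∧
      (∀ d ∈ detMor (Fin.snoc T T₀) '' C, h (h' d) = d) := by
  obtain ⟨σ, -, hσ⟩ := hgen
  refine ⟨addLast σ, dropLast, ⟨?_, ?_⟩, ⟨?_, ?_⟩, ?_, ?_⟩
  · rintro d ⟨c, hc, rfl⟩
    exact ⟨c, hc, (addLast_detMor T T₀ σ hσ c).symm⟩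
  · rintro Tt (rfl | ⟨τ, rfl⟩)
    · left; simp
    · right
      refine ⟨(Finset.univ.filter fun i : Fin m => i.castSucc ∈ τ) ∪
        (if Fin.last m ∈ τ then σ.toFinset else ∅), ?_⟩
      ext d
      simp only [Set.mem_inter_iff, Set.mem_preimage, Tk, Set.mem_setOf_eq]
      constructor
      · rintro ⟨hd, _, hτ⟩
        exact ⟨hd, (subset_addLast_iff σ τ d).1 hτ⟩
      · rintro ⟨hd, hτ⟩
        obtain ⟨c, hc, rfl⟩ := hd
        refine ⟨⟨c, hc, rfl⟩, ?_, (subset_addLast_iff _ _ _).2 hτ⟩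
        rw [addLast_detMor T T₀ σ hσ]
        exact ⟨c, hc, rfl⟩
  · rintro d ⟨c, hc, rfl⟩
    exact ⟨c, hc, (dropLast_detMor T T₀ c).symm⟩
  · rintro Tt (rfl | ⟨τ, rfl⟩)
    · left; simp
    · right
      refine ⟨τ.map Fin.castSuccEmb, ?_⟩
      ext d
      simp only [Set.mem_inter_iff, Set.mem_preimage, Tk, Set.mem_setOf_eq]
      constructor
      · rintro ⟨hd, _, hτ⟩
        exact ⟨hd, (subset_dropLast_iff τ d).1 hτ⟩
      · rintro ⟨hd, hτ⟩
        obtain ⟨c, hc, rfl⟩ := hd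
        refine ⟨⟨c, hc, rfl⟩, ?_, (subset_dropLast_iff _ _).2 hτ⟩
        rw [dropLast_detMor T T₀]
        exact ⟨c, hc, rfl⟩
  · rintro d -
    exact dropLast_addLast σ d
  · rintro d ⟨c, hc, rfl⟩
    rw [dropLast_detMor T T₀, addLast_detMor T T₀ σ hσ]
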